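/- Assume Δz_{i+1/2} ≠ 0. Then the sign property ⟦z⟧_{i+1/2}·Δz_{i+1/2} ≥ 0 holds if and only if w̃_0(1 - θ_{i+1}^-) + w_1(1 - θ_i^+) ≥ 0; moreover ⟦z⟧_{i+1/2} and Δz_{i+1/2} have the same strict sign (⟦z⟧_{i+1/2}·Δz_{i+1/2} > 0) if and only if w̃_0(1 - θ_{i+1}^-) + w_1(1 - θ_i^+) > 0. -/
import Mathlib

/-- Assuming `Δz_{i+1/2} ≠ 0`, the sign property
`⟦z⟧_{i+1/2}·Δz_{i+1/2} ≥ 0` holds iff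
`w̃₀(1 - θ⁻_{i+1}) + w₁(1 - θ⁺_i) ≥ 0`, and the strict version
`⟦z⟧_{i+1/2}·Δz_{i+1/2} > 0` holds iff `w̃₀(1 - θ⁻_{i+1}) + w₁(1 - θ⁺_i) > 0`. -/
theorem weno_sign_property_iff (zm z0 z1 z2 C1 C2 : ℝ) (hΔ : z1 - z0 ≠ 0) :
    ((((1/4 - 2*C2)*(3*z1 - z2) + (3/4 + 2*C2)*(z0 + z1))/2
        - ((3/4 + 2*C1)*(z0 + z1) + (1/4 - 2*C1)*(3*z0 - zm))/2) * (z1 - z0) ≥ 0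
      ↔ (1/4 - 2*C2)*(1 - (z2 - z1)/(z1 - z0))
          + (1/4 - 2*C1)*(1 - (z0 - zm)/(z1 - z0)) ≥ 0) ∧
    ((((1/4 - 2*C2)*(3*z1 - z2) + (3/4 + 2*C2)*(z0 + z1))/2
        - ((3/4 + 2*C1)*(z0 + z1) + (1/4 - 2*C1)*(3*z0 - zm))/2) * (z1 - z0) > 0
      ↔ (1/4 - 2*C2)*(1 - (z2 - z1)/(z1 - z0))
          + (1/4 - 2*C1)*(1 - (z0 - zm)/(z1 - z0)) > 0) := by
  have hsq : (0:ℝ) < (z1 - z0)^2 / 2 := by positivity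
  have key : (((1/4 - 2*C2)*(3*z1 - z2) + (3/4 + 2*C2)*(z0 + z1))/2
        - ((3/4 + 2*C1)*(z0 + z1) + (1/4 - 2*C1)*(3*z0 - zm))/2) * (z1 - z0)
      = ((z1 - z0)^2 / 2) * ((1/4 - 2*C2)*(1 - (z2 - z1)/(z1 - z0))
          + (1/4 - 2*C1)*(1 - (z0 - zm)/(z1 - z0))) := by
    field_simp
    ring
  rw [key]
  constructor
  · exact ⟨fun h => nonneg_of_mul_nonneg_right (by linarith) hsq,
      fun h => mul_nonneg hsq.le h⟩
  · exact mul_pos_iff_of_pos_left hsq
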